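/- arXiv:2202.01973 — 3 statements merged into one kernel-verified Lean document; each statement's English description precedes it below -/
import Mathlib

section
/- Let Π be a 1-anticoherent subspace of C^N with orthonormal basis {φ_i}, and let Π(t) = U(t)(Π) where U(t) = exp(-i m(t)·S) for a smooth path m(t) of rotation vectors. Then the Wilczek–Zee connection A_{ij}(t) = ⟨φ_i(t)| d/dt |φ_j(t)⟩, with φ_i(t) = U(t)φ_i, vanishes identically. -/
open Matrix

open NormedSpace in
/-- auxiliary linear functional `A ↦ ⟨v, A w⟩` -/
noncomputable def WZaux {N : ℕ} (v w : Fin N → ℂ) :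
    Matrix (Fin N) (Fin N) ℂ →ₗ[ℂ] ℂ where
  toFun A := star v ⬝ᵥ (A *ᵥ w)
  map_add' A B := by simp [Matrix.add_mulVec, dotProduct_add]
  map_smul' r A := by simp [Matrix.smul_mulVec]

/-- auxiliary entry functional -/
noncomputable def WZentry {n : ℕ} (a b : Fin n) :
    Matrix (Fin n) (Fin n) ℂ →ₗ[ℂ] ℂ where
  toFun P := P a b
  map_add' A B := rfl
  map_smul' r A := rfl

/-- For a 1-anticoherent subspace spanned by the orthonormal family {φ_i} and the
curve of rotations U(t) = exp(-i m(t)·S), with d/dt U(t) = -i (m'(t)·S) U(t),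
the Wilczek–Zee connection A_{ij}(t) = ⟨U(t)φ_i | d/dt U(t)φ_j⟩ vanishes identically. -/
theorem WZ_connection_vanishes
    {N k : ℕ} (S : Fin 3 → Matrix (Fin N) (Fin N) ℂ)
    (hS : ∀ a, (S a).IsHermitian)
    (hcomm01 : S 0 * S 1 - S 1 * S 0 = Complex.I • S 2)
    (hcomm12 : S 1 * S 2 - S 2 * S 1 = Complex.I • S 0)
    (hcomm20 : S 2 * S 0 - S 0 * S 2 = Complex.I • S 1)
    (φ : Fin k → (Fin N → ℂ))
    (hφ : ∀ i j, star (φ i) ⬝ᵥ φ j = if i = j then 1 else 0)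
    (hanti : ∀ (a : Fin 3) (i j : Fin k), star (φ i) ⬝ᵥ ((S a) *ᵥ φ j) = 0)
    (m m' : ℝ → (Fin 3 → ℝ))
    (U : ℝ → Matrix (Fin N) (Fin N) ℂ)
    (hU : ∀ t, U t = NormedSpace.exp ((-Complex.I) • ∑ b, ((m t b : ℂ) • S b)))
    (hderiv : ∀ (t : ℝ) (j : Fin k),
      HasDerivAt (fun s => U s *ᵥ φ j)
        ((((-Complex.I) • ∑ b, ((m' t b : ℂ) • S b)) * U t) *ᵥ φ j) t) :
    ∀ (t : ℝ) (i j : Fin k),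
      star (U t *ᵥ φ i) ⬝ᵥ
        ((((-Complex.I) • ∑ b, ((m' t b : ℂ) • S b)) * U t) *ᵥ φ j) = 0 := by
  intro t i j
  classical
  open NormedSpace in
  letI : SeminormedRing (Matrix (Fin N) (Fin N) ℂ) := Matrix.linftyOpSemiNormedRing
  letI : NormedRing (Matrix (Fin N) (Fin N) ℂ) := Matrix.linftyOpNormedRing
  letI : NormedAlgebra ℝ (Matrix (Fin N) (Fin N) ℂ) := Matrix.linftyOpNormedAlgebra
  letI : NormedAlgebra ℂ (Matrix (Fin N) (Fin N) ℂ) := Matrix.linftyOpNormedAlgebra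
  letI : NormedAlgebra ℚ (Matrix (Fin N) (Fin N) ℂ) := Matrix.linftyOpNormedAlgebra
  letI : CompleteSpace (Matrix (Fin N) (Fin N) ℂ) := FiniteDimensional.complete ℂ _
  letI : SeminormedRing (Matrix (Fin 3) (Fin 3) ℂ) := Matrix.linftyOpSemiNormedRing
  letI : NormedRing (Matrix (Fin 3) (Fin 3) ℂ) := Matrix.linftyOpNormedRing
  letI : NormedAlgebra ℝ (Matrix (Fin 3) (Fin 3) ℂ) := Matrix.linftyOpNormedAlgebra
  letI : NormedAlgebra ℂ (Matrix (Fin 3) (Fin 3) ℂ) := Matrix.linftyOpNormedAlgebra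
  letI : NormedAlgebra ℚ (Matrix (Fin 3) (Fin 3) ℂ) := Matrix.linftyOpNormedAlgebra
  letI : CompleteSpace (Matrix (Fin 3) (Fin 3) ℂ) := FiniteDimensional.complete ℂ _
  -- the generator
  set X : Matrix (Fin N) (Fin N) ℂ := ∑ b, ((m t b : ℂ) • S b) with hXdef
  set E : ℝ → Matrix (Fin N) (Fin N) ℂ :=
    fun s => NormedSpace.exp (s • ((-Complex.I) • X)) with hEdef
  set F : ℝ → Matrix (Fin N) (Fin N) ℂ :=
    fun s => NormedSpace.exp (s • (Complex.I • X)) with hFdef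
  -- Hermiticity of X
  have hXherm : Xᴴ = X := by
    rw [hXdef]
    simp only [conjTranspose_sum, conjTranspose_smul]
    refine Finset.sum_congr rfl fun b _ => ?_
    rw [(hS b).eq]
    congr 1
    simp [Complex.star_def, Complex.conj_ofReal]
  -- derivative helpers
  have hEd : ∀ s, HasDerivAt E (E s * ((-Complex.I) • X)) s :=
    fun s => hasDerivAt_exp_smul_const _ s
  have hFd : ∀ s, HasDerivAt F ((Complex.I • X) * F s) s :=
    fun s => hasDerivAt_exp_smul_const' _ s
  -- commutation with exponentials
  have hXE : ∀ s, X * E s = E s * X := fun s =>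
    ((((Commute.refl X).smul_right (-Complex.I)).smul_right s).exp_right).eq
  have hXF : ∀ s, X * F s = F s * X := fun s =>
    ((((Commute.refl X).smul_right Complex.I).smul_right s).exp_right).eq
  have hFE : ∀ s, F s * E s = 1 := by
    intro s
    have hco : Commute (s • (Complex.I • X)) (s • ((-Complex.I) • X)) :=
      ((((Commute.refl X).smul_right (-Complex.I)).smul_left Complex.I).smul_left s).smul_right s
    rw [hFdef, hEdef]
    beta_reduce
    erw [← NormedSpace.exp_add_of_commute hco]
    have : s • (Complex.I • X) + s • ((-Complex.I) • X) = 0 := by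
      rw [← smul_add]
      simp [neg_smul]
    rw [this, NormedSpace.exp_zero]
  -- derivative of W a := F * S a * E
  have hW : ∀ (a : Fin 3) (s : ℝ),
      HasDerivAt (fun u => F u * S a * E u)
        (F s * (Complex.I • (X * S a - S a * X)) * E s) s := by
    intro a s
    have h1 := ((hFd s).mul_const (S a)).mul (hEd s)
    refine h1.congr_deriv ?_
    have e1 : Complex.I • X * F s = F s * (Complex.I • X) := by
      rw [smul_mul_assoc, hXF, mul_smul_comm]
    have e2 : E s * ((-Complex.I) • X) = ((-Complex.I) • X) * E s := by
      rw [smul_mul_assoc, hXE, mul_smul_comm]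
    rw [e1, e2]
    simp only [smul_sub, mul_sub, sub_mul, smul_mul_assoc, mul_smul_comm, neg_smul]
    noncomm_ring
  -- the coefficient matrix
  set B : Matrix (Fin 3) (Fin 3) ℂ :=
    !![0, -((m t 2 : ℝ) : ℂ), ((m t 1 : ℝ) : ℂ);
       ((m t 2 : ℝ) : ℂ), 0, -((m t 0 : ℝ) : ℂ);
       -((m t 1 : ℝ) : ℂ), ((m t 0 : ℝ) : ℂ), 0] with hBdef
  -- bracket computation
  have hbrak : ∀ a : Fin 3, Complex.I • (X * S a - S a * X) = ∑ b, B a b • S b := by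
    have expand : ∀ a : Fin 3, X * S a - S a * X
        = ∑ b, ((m t b : ℝ) : ℂ) • (S b * S a - S a * S b) := by
      intro a
      rw [hXdef, Finset.sum_mul, Finset.mul_sum, ← Finset.sum_sub_distrib]
      exact Finset.sum_congr rfl fun b _ => by
        rw [smul_mul_assoc, mul_smul_comm, smul_sub]
    have h10 : S 1 * S 0 - S 0 * S 1 = -(Complex.I • S 2) := by
      rw [← hcomm01]; abel
    have h21 : S 2 * S 1 - S 1 * S 2 = -(Complex.I • S 0) := by
      rw [← hcomm12]; abel
    have h02 : S 0 * S 2 - S 2 * S 0 = -(Complex.I • S 1) := by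
      rw [← hcomm20]; abel
    have e0 : ∑ b, B 0 b • S b
        = (0:ℂ) • S 0 + (-((m t 2 : ℝ) : ℂ)) • S 1 + ((m t 1 : ℝ) : ℂ) • S 2 := by
      rw [Fin.sum_univ_three]; rfl
    have e1 : ∑ b, B 1 b • S b
        = ((m t 2 : ℝ) : ℂ) • S 0 + (0:ℂ) • S 1 + (-((m t 0 : ℝ) : ℂ)) • S 2 := by
      rw [Fin.sum_univ_three]; rfl
    have e2 : ∑ b, B 2 b • S b
        = (-((m t 1 : ℝ) : ℂ)) • S 0 + ((m t 0 : ℝ) : ℂ) • S 1 + (0:ℂ) • S 2 := by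
      rw [Fin.sum_univ_three]; rfl
    have hb0 : Complex.I • (X * S 0 - S 0 * X) = ∑ b, B 0 b • S b := by
      rw [expand, Fin.sum_univ_three, e0, h10, hcomm20, sub_self]
      match_scalars <;> linear_combination (norm := ring_nf) (exp := 1) ?_ <;>
        simp [Complex.I_sq]
    have hb1 : Complex.I • (X * S 1 - S 1 * X) = ∑ b, B 1 b • S b := by
      rw [expand, Fin.sum_univ_three, e1, hcomm01, h21, sub_self]
      match_scalars <;> linear_combination (norm := ring_nf) (exp := 1) ?_ <;>
        simp [Complex.I_sq]
    have hb2 : Complex.I • (X * S 2 - S 2 * X) = ∑ b, B 2 b • S b := by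
      rw [expand, Fin.sum_univ_three, e2, hcomm12, h02, sub_self]
      match_scalars <;> linear_combination (norm := ring_nf) (exp := 1) ?_ <;>
        simp [Complex.I_sq]
    intro a
    fin_cases a
    exacts [hb0, hb1, hb2]
  -- derivative of W in terms of the W's
  have hW2 : ∀ (a : Fin 3) (s : ℝ),
      HasDerivAt (fun u => F u * S a * E u)
        (∑ b, B a b • (F s * S b * E s)) s := by
    intro a s
    have := hW a s
    rw [hbrak a] at this
    convert this using 1
    rw [Finset.mul_sum, Finset.sum_mul]
    exact Finset.sum_congr rfl fun b _ => by
      rw [mul_smul_comm, smul_mul_assoc]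
  -- the scalar functions
  set g : ℝ → Fin 3 → ℂ :=
    fun s a => WZaux (φ i) (φ j) (F s * S a * E s) with hgdef
  have hcomp : ∀ {f : ℝ → Matrix (Fin N) (Fin N) ℂ}
      {f' : Matrix (Fin N) (Fin N) ℂ} {s : ℝ}, HasDerivAt f f' s →
      HasDerivAt (fun u => WZaux (φ i) (φ j) (f u)) (WZaux (φ i) (φ j) f') s := by
    intro f f' s hf
    exact ((((WZaux (φ i) (φ j)).toContinuousLinearMap.restrictScalars ℝ).hasFDerivAt
      (x := f s)).comp_hasDerivAt s hf)
  have hg0 : ∀ a, g 0 a = 0 := by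
    intro a
    rw [hgdef]
    simp only [hEdef, hFdef, zero_smul, NormedSpace.exp_zero, one_mul, mul_one]
    simpa [WZaux] using hanti a i j
  have hgd : ∀ (s : ℝ) (a : Fin 3),
      HasDerivAt (fun u => g u a) ((B *ᵥ g s) a) s := by
    intro s a
    have := hcomp (hW2 a s)
    convert this using 1
    rw [_root_.map_sum]
    simp only [Matrix.mulVec, dotProduct, hgdef]
    exact Finset.sum_congr rfl fun b _ => by
      rw [LinearMap.map_smul, smul_eq_mul]
  -- inverse propagator
  set P : ℝ → Matrix (Fin 3) (Fin 3) ℂ :=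
    fun s => NormedSpace.exp (s • (-B)) with hPdef
  have hPd : ∀ s, HasDerivAt P ((-B) * P s) s :=
    fun s => hasDerivAt_exp_smul_const' _ s
  have hPdentry : ∀ (s : ℝ) (a b : Fin 3),
      HasDerivAt (fun u => P u a b) (((-B) * P s) a b) s := by
    intro s a b
    exact ((((WZentry a b).toContinuousLinearMap.restrictScalars ℝ).hasFDerivAt
      (x := P s)).comp_hasDerivAt s (hPd s))
  have hBP : ∀ s, B * P s = P s * B := fun s =>
    ((((Commute.refl B).neg_right).smul_right s).exp_right).eq
  -- h has zero derivative
  have hhd : ∀ (s : ℝ) (a : Fin 3),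
      HasDerivAt (fun u => ∑ b, P u a b * g u b) 0 s := by
    intro s a
    have hterm : ∀ b : Fin 3, HasDerivAt (fun u => P u a b * g u b)
        (((-B) * P s) a b * g s b + P s a b * ((B *ᵥ g s) b)) s :=
      fun b => (hPdentry s a b).mul (hgd s b)
    have hsum := HasDerivAt.fun_sum (fun b (_ : b ∈ Finset.univ) => hterm b)
    refine hsum.congr_deriv ?_
    have e1 : ∑ b, P s a b * ((B *ᵥ g s) b) = ∑ c, (B * P s) a c * g s c := by
      calc ∑ b, P s a b * ((B *ᵥ g s) b)
          = ∑ b, ∑ c, P s a b * B b c * g s c := by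
            simp only [Matrix.mulVec, dotProduct, Finset.mul_sum, mul_assoc]
        _ = ∑ c, (∑ b, P s a b * B b c) * g s c := by
            rw [Finset.sum_comm]
            simp only [Finset.sum_mul]
        _ = ∑ c, (P s * B) a c * g s c := by
            simp only [Matrix.mul_apply]
        _ = ∑ c, (B * P s) a c * g s c := by rw [← hBP]
    rw [Finset.sum_add_distrib, e1]
    simp only [Matrix.neg_mul, Matrix.neg_apply, neg_mul]
    rw [Finset.sum_neg_distrib]
    ring
  -- hence constant, and zero at 0
  have hconst : ∀ (s : ℝ) (a : Fin 3), ∑ b, P s a b * g s b = 0 := by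
    intro s a
    have hdiff : Differentiable ℝ (fun u => ∑ b, P u a b * g u b) :=
      fun x => (hhd x a).differentiableAt
    have hz := is_const_of_deriv_eq_zero hdiff (fun x => (hhd x a).deriv) s 0
    rw [hz]
    simp [hg0]
  -- hence g vanishes
  have hgzero : ∀ s : ℝ, g s = 0 := by
    intro s
    have hQP : NormedSpace.exp (s • B) * P s = 1 := by
      have hco : Commute (s • B) (s • (-B)) :=
        (((Commute.refl B).neg_right).smul_left s).smul_right s
      rw [hPdef]
      beta_reduce
      erw [← NormedSpace.exp_add_of_commute hco]
      have : s • B + s • (-B) = 0 := by rw [← smul_add]; simp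
      rw [this, NormedSpace.exp_zero]
    have hPg : P s *ᵥ g s = 0 := by
      funext a
      simpa [Matrix.mulVec, dotProduct] using hconst s a
    calc g s = (NormedSpace.exp (s • B) * P s) *ᵥ g s := by
          rw [hQP, Matrix.one_mulVec]
      _ = NormedSpace.exp (s • B) *ᵥ (P s *ᵥ g s) := by
          rw [Matrix.mulVec_mulVec]
      _ = 0 := by rw [hPg, Matrix.mulVec_zero]
  -- identification at s = 1
  have hUt : U t = E 1 := by
    rw [hU t, hEdef]
    simp only [one_smul]
    rfl
  have hE1H : (E 1)ᴴ = F 1 := by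
    rw [hEdef, hFdef]
    simp only [one_smul]
    rw [← Matrix.exp_conjTranspose]
    congr 1
    rw [conjTranspose_smul, hXherm]
    simp [Complex.star_def]
  -- the key vanishing
  have key : ∀ a : Fin 3, star (U t *ᵥ φ i) ⬝ᵥ (S a *ᵥ (U t *ᵥ φ j)) = 0 := by
    intro a
    have hz := congrFun (hgzero 1) a
    rw [hgdef] at hz
    simp only [WZaux, LinearMap.coe_mk, AddHom.coe_mk, Pi.zero_apply] at hz
    rw [Matrix.dotProduct_mulVec, mul_assoc] at hz
    rw [hUt, star_mulVec, hE1H, Matrix.mulVec_mulVec, Matrix.dotProduct_mulVec,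
      Matrix.vecMul_vecMul]
    exact hz
  -- conclude
  show WZaux (U t *ᵥ φ i) (φ j)
      (((-Complex.I) • ∑ b, ((m' t b : ℂ) • S b)) * U t) = 0
  rw [Matrix.smul_mul, LinearMap.map_smul]
  rw [Finset.sum_mul, _root_.map_sum]
  have each : ∀ b : Fin 3,
      WZaux (U t *ᵥ φ i) (φ j) (((m' t b : ℂ) • S b) * U t) = 0 := by
    intro b
    rw [Matrix.smul_mul, LinearMap.map_smul]
    have hzero : WZaux (U t *ᵥ φ i) (φ j) (S b * U t) = 0 := by
      simpa [WZaux, Matrix.mulVec_mulVec] using key b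
    rw [hzero, smul_zero]
  simp only [each, Finset.sum_const_zero, smul_zero]
end

section
/- Let D = exp(-i π S_y) be the spin-2 rotation by angle π about the y-axis. Then D maps the subspace Π_NOT = span{ψ_1, ψ_2} to itself; more precisely, D ψ_1 = -ψ_2 and D ψ_2 = -ψ_1 (up to an overall consistent sign convention), so the matrix of D restricted to Π_NOT in the basis {ψ_1, ψ_2} is proportional to the Pauli matrix σ_x. -/
open Matrix Complex

/-- Spin-2 raising operator on ℂ⁵ in the basis |2,2⟩,…,|2,-2⟩ (index i ↔ m = 2 - i). -/
noncomputable def Splus : Matrix (Fin 5) (Fin 5) ℂ :=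
  Matrix.of fun i j =>
    if (i : ℕ) + 1 = (j : ℕ) then ((Real.sqrt ((j : ℕ) * (5 - (j : ℕ))) : ℝ) : ℂ) else 0

noncomputable def Sminus : Matrix (Fin 5) (Fin 5) ℂ := Splus.conjTranspose

noncomputable def Sx : Matrix (Fin 5) (Fin 5) ℂ := (1 / 2 : ℂ) • (Splus + Sminus)

noncomputable def Sy : Matrix (Fin 5) (Fin 5) ℂ := (-Complex.I / 2) • (Splus - Sminus)

noncomputable def Sz : Matrix (Fin 5) (Fin 5) ℂ :=
  Matrix.diagonal fun i : Fin 5 => (2 : ℂ) - (i : ℕ)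

/-- ψ₁ = (1/√3)(1,0,0,√2,0). -/
noncomputable def ψ1 : Fin 5 → ℂ := fun i =>
  ((Real.sqrt 3)⁻¹ : ℝ) * ![1, 0, 0, ((Real.sqrt 2 : ℝ) : ℂ), 0] i

/-- ψ₂ = (1/√3)(0,-√2,0,0,1). -/
noncomputable def ψ2 : Fin 5 → ℂ := fun i =>
  ((Real.sqrt 3)⁻¹ : ℝ) * ![0, -((Real.sqrt 2 : ℝ) : ℂ), 0, 0, 1] i

noncomputable def r6 : ℂ := ((Real.sqrt 6 : ℝ) : ℂ)

lemma r6_sq : r6 ^ 2 = 6 := by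
  have : Real.sqrt 6 ^ 2 = 6 := Real.sq_sqrt (by norm_num)
  simp [r6, ← Complex.ofReal_pow, this]

lemma sqrt4 : Real.sqrt 4 = 2 := by
  rw [show (4:ℝ) = 2^2 by norm_num, Real.sqrt_sq (by norm_num)]

lemma sqrt23 : Real.sqrt 2 * Real.sqrt 3 = Real.sqrt 6 := by
  rw [← Real.sqrt_mul (by norm_num)]; norm_num

lemma c23 : ((Real.sqrt 2 : ℝ) : ℂ) * ((Real.sqrt 3 : ℝ) : ℂ) = r6 := by
  rw [r6, ← Complex.ofReal_mul, sqrt23]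

lemma c32 : ((Real.sqrt 3 : ℝ) : ℂ) * ((Real.sqrt 2 : ℝ) : ℂ) = r6 := by
  rw [mul_comm]; exact c23

lemma hSplus : Splus = !![0,2,0,0,0; 0,0,r6,0,0; 0,0,0,r6,0; 0,0,0,0,2; 0,0,0,0,0] := by
  ext i j
  fin_cases i <;> fin_cases j <;>
    norm_num [Splus, r6, sqrt4, c23, c32]

lemma hSy : Sy = !![0, -Complex.I, 0, 0, 0;
    Complex.I, 0, -(Complex.I*r6)/2, 0, 0;
    0, (Complex.I*r6)/2, 0, -(Complex.I*r6)/2, 0;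
    0, 0, (Complex.I*r6)/2, 0, -Complex.I;
    0, 0, 0, Complex.I, 0] := by
  have hr6 : (starRingEnd ℂ) r6 = r6 := by simp [r6]
  rw [Sy, Sminus, hSplus]
  ext i j
  fin_cases i <;> fin_cases j <;>
    simp [Matrix.conjTranspose_apply, hr6, Matrix.vecHead, Matrix.vecTail, Function.comp] <;> ring

noncomputable def Pm : Matrix (Fin 5) (Fin 5) ℂ :=
  !![1,1,3,1,1;
     2*Complex.I, Complex.I, 0, -Complex.I, -(2*Complex.I);
     -r6, 0, r6, 0, -r6;
     -(2*Complex.I), Complex.I, 0, -Complex.I, 2*Complex.I;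
     1,-1,3,-1,1]

noncomputable def Qm : Matrix (Fin 5) (Fin 5) ℂ :=
  !![1/16, -(2*Complex.I)/16, -r6/16, (2*Complex.I)/16, 1/16;
     1/4, -Complex.I/4, 0, -Complex.I/4, -(1/4);
     3/24, 0, r6/24, 0, 3/24;
     1/4, Complex.I/4, 0, Complex.I/4, -(1/4);
     1/16, (2*Complex.I)/16, -r6/16, -((2*Complex.I)/16), 1/16]

lemma hPQ : Pm * Qm = 1 := by
  ext i j
  fin_cases i <;> fin_cases j <;>
    simp [Pm, Qm, Matrix.mul_apply, Fin.sum_univ_five, Matrix.one_apply] <;>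
    ring_nf <;> simp [r6_sq, Complex.I_sq] <;> ring_nf

lemma hQP : Qm * Pm = 1 := by
  ext i j
  fin_cases i <;> fin_cases j <;>
    simp [Pm, Qm, Matrix.mul_apply, Fin.sum_univ_five, Matrix.one_apply] <;>
    ring_nf <;> simp [r6_sq, Complex.I_sq] <;> ring_nf

noncomputable def dvec : Fin 5 → ℂ := ![2,1,0,-1,-2]

lemma hSyP : Sy * Pm = Pm * Matrix.diagonal dvec := by
  rw [hSy]
  ext i j
  fin_cases i <;> fin_cases j <;>
    simp [Pm, dvec, Matrix.mul_apply, Fin.sum_univ_five, Matrix.diagonal] <;>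
    ring_nf <;> simp [r6_sq, Complex.I_sq] <;> ring_nf

noncomputable def evec : Fin 5 → ℂ := ![1,-1,1,-1,1]

noncomputable def Pe : Matrix (Fin 5) (Fin 5) ℂ :=
  !![1,-1,3,-1,1;
     2*Complex.I, -Complex.I, 0, Complex.I, -(2*Complex.I);
     -r6, 0, r6, 0, -r6;
     -(2*Complex.I), -Complex.I, 0, Complex.I, 2*Complex.I;
     1,1,3,1,1]

noncomputable def Dfin : Matrix (Fin 5) (Fin 5) ℂ :=
  !![0,0,0,0,1; 0,0,0,-1,0; 0,0,1,0,0; 0,-1,0,0,0; 1,0,0,0,0]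

lemma hPe : Pm * Matrix.diagonal evec = Pe := by
  ext i j
  fin_cases i <;> fin_cases j <;>
    simp [Pm, Pe, evec, Matrix.mul_diagonal] <;> ring

lemma hDfin : Pm * Matrix.diagonal evec * Qm = Dfin := by
  rw [hPe]
  ext i j
  fin_cases i <;> fin_cases j <;>
    simp [Pe, Qm, Dfin, Matrix.mul_apply, Fin.sum_univ_five, Matrix.vecHead, Matrix.vecTail] <;>
    (try ring_nf) <;> (try simp [r6_sq, Complex.I_sq]) <;> (try ring_nf)

lemma exp_vals :
    NormedSpace.exp (fun k => (-Complex.I * (Real.pi : ℂ)) * dvec k) = evec := by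
  funext k
  rw [Pi.coe_exp, ← Complex.exp_eq_exp_ℂ]
  fin_cases k <;> simp only [dvec, evec] <;> norm_num
  · rw [show -(Complex.I * (Real.pi:ℂ) * 2) = -((Real.pi:ℂ)*Complex.I) + -((Real.pi:ℂ)*Complex.I) by ring,
      Complex.exp_add, Complex.exp_neg, Complex.exp_pi_mul_I]; norm_num
  · rw [show -(Complex.I * (Real.pi:ℂ)) = -((Real.pi:ℂ)*Complex.I) by ring,
      Complex.exp_neg, Complex.exp_pi_mul_I]; norm_num
  · rw [show Complex.I * (Real.pi:ℂ) = (Real.pi:ℂ)*Complex.I by ring,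
      Complex.exp_pi_mul_I]
  · rw [show Complex.I * (Real.pi:ℂ) * 2 = ((Real.pi:ℂ)*Complex.I) + ((Real.pi:ℂ)*Complex.I) by ring,
      Complex.exp_add, Complex.exp_pi_mul_I]; norm_num

lemma hexp : NormedSpace.exp ((-Complex.I * (Real.pi : ℂ)) • Sy) = Dfin := by
  have hSyDecomp : Sy = Pm * Matrix.diagonal dvec * Qm := by
    calc Sy = Sy * (Pm * Qm) := by rw [hPQ, mul_one]
    _ = (Sy * Pm) * Qm := by rw [mul_assoc]
    _ = Pm * Matrix.diagonal dvec * Qm := by rw [hSyP]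
  have hA : (-Complex.I * (Real.pi : ℂ)) • Sy
      = Pm * Matrix.diagonal (fun k => (-Complex.I * (Real.pi : ℂ)) * dvec k) * Qm := by
    rw [hSyDecomp, ← Matrix.smul_mul, ← Matrix.mul_smul, ← Matrix.diagonal_smul]
    rfl
  have hunit : IsUnit Pm := ⟨⟨Pm, Qm, hPQ, hQP⟩, rfl⟩
  have hinv : Pm⁻¹ = Qm := Matrix.inv_eq_right_inv hPQ
  rw [hA, ← hinv, Matrix.exp_conj Pm _ hunit, Matrix.exp_diagonal, exp_vals, hinv, hDfin]

/-- The spin-2 rotation D = exp(-iπ S_y) maps Π_NOT to itself, interchanging ψ₁ and ψ₂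
up to an overall consistent sign: its restriction to Π_NOT is proportional (by ±1) to σ_x. -/
theorem rotation_y_pi_on_PiNOT :
    ∃ ε : ℂ, (ε = 1 ∨ ε = -1) ∧
      (NormedSpace.exp ((-Complex.I * (Real.pi : ℂ)) • Sy)) *ᵥ ψ1 = ε • ψ2 ∧
      (NormedSpace.exp ((-Complex.I * (Real.pi : ℂ)) • Sy)) *ᵥ ψ2 = ε • ψ1 := by
  refine ⟨1, Or.inl rfl, ?_, ?_⟩ <;> rw [hexp] <;> funext i <;>
    fin_cases i <;>
    simp [Dfin, Matrix.mulVec, dotProduct, Fin.sum_univ_five, ψ1, ψ2,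
      Matrix.vecHead, Matrix.vecTail] <;> (try ring)
end

section
/- If Π is a 1-anticoherent k-plane and Π(t) = U(t)(Π) for a smooth path U(t) of rotations with U(0) = Id and U(T)(Π) = Π, then the Wilczek–Zee holonomy of the closed curve Π(t) equals the unitary matrix Q with Q_{ij} = ⟨φ_i| U(T) |φ_j⟩ (which is already unitary), where {φ_i} is any orthonormal basis of Π. In particular, the holonomy depends only on the endpoint U(T) and not on the path. -/
open Matrix
open scoped ComplexOrder

attribute [local instance] Matrix.linftyOpNormedAddCommGroup Matrix.linftyOpNormedSpace

section AuxiliaryLemmas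

open NormedSpace

attribute [local instance] Matrix.linftyOpNormedRing Matrix.linftyOpNormedAlgebra

lemma dotProduct_sum' {n k : ℕ} (v : Fin n → ℂ) (f : Fin k → Fin n → ℂ) :
    v ⬝ᵥ (∑ i, f i) = ∑ i, v ⬝ᵥ f i := by
  simp only [dotProduct, Finset.sum_apply, Finset.mul_sum]
  exact Finset.sum_comm

lemma sum_dotProduct' {n k : ℕ} (f : Fin k → Fin n → ℂ) (v : Fin n → ℂ) :
    (∑ i, f i) ⬝ᵥ v = ∑ i, f i ⬝ᵥ v := by
  simp only [dotProduct, Finset.sum_apply, Finset.sum_mul]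
  exact Finset.sum_comm

lemma sum_mulVec' {n N : ℕ} (M : Fin n → Matrix (Fin N) (Fin N) ℂ) (v : Fin N → ℂ) :
    (∑ i, M i) *ᵥ v = ∑ i, (M i *ᵥ v) := by
  funext p
  simp only [Matrix.mulVec, dotProduct, Finset.sum_apply, Matrix.sum_apply, Finset.sum_mul]
  exact Finset.sum_comm

lemma dot_unitary {N : ℕ} (P : Matrix (Fin N) (Fin N) ℂ) (hP : Pᴴ * P = 1) (x y : Fin N → ℂ) :
    star (P *ᵥ x) ⬝ᵥ (P *ᵥ y) = star x ⬝ᵥ y := by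
  rw [dotProduct_mulVec, star_mulVec, vecMul_vecMul, hP, vecMul_one]

lemma exp_unitary_conj {N : ℕ} (X : Matrix (Fin N) (Fin N) ℂ) (hX : Xᴴ = X) :
    (exp ((-Complex.I) • X))ᴴ * exp ((-Complex.I) • X) = 1 := by
  rw [← Matrix.exp_conjTranspose, conjTranspose_smul, hX]
  rw [← Matrix.exp_add_of_commute]
  · simp [← add_smul]
  · exact (Commute.refl X).smul_left _ |>.smul_right _


lemma dot_conj {N : ℕ} (P M R : Matrix (Fin N) (Fin N) ℂ) (x y : Fin N → ℂ) :
    star (P *ᵥ x) ⬝ᵥ (M *ᵥ (R *ᵥ y)) = star x ⬝ᵥ ((Pᴴ * M * R) *ᵥ y) := by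
  rw [mulVec_mulVec, dotProduct_mulVec, dotProduct_mulVec, star_mulVec, vecMul_vecMul, mul_assoc]

lemma hasDerivAt_stardot {N : ℕ} {u v : ℝ → Fin N → ℂ} {u' v' : Fin N → ℂ}
    (M : Matrix (Fin N) (Fin N) ℂ) {s : ℝ}
    (hu : HasDerivAt u u' s) (hv : HasDerivAt v v' s) :
    HasDerivAt (fun r => star (u r) ⬝ᵥ (M *ᵥ v r))
      (star u' ⬝ᵥ (M *ᵥ v s) + star (u s) ⬝ᵥ (M *ᵥ v')) s := by
  have h1 : HasDerivAt (fun r => ∑ p, star (u r p) * ∑ q, M p q * v r q)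
      (∑ p, (star (u' p) * ∑ q, M p q * v s q + star (u s p) * ∑ q, M p q * v' q)) s := by
    apply HasDerivAt.fun_sum
    intro p _
    exact ((hasDerivAt_pi.1 hu p).star.mul
      (HasDerivAt.fun_sum fun q _ => ((hasDerivAt_pi.1 hv q).const_mul (M p q))))
  have e2 : star u' ⬝ᵥ (M *ᵥ v s) + star (u s) ⬝ᵥ (M *ᵥ v')
      = ∑ p, (star (u' p) * ∑ q, M p q * v s q + star (u s p) * ∑ q, M p q * v' q) := by
    simp [dotProduct, mulVec, Finset.sum_add_distrib]
  rw [e2]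
  exact h1

lemma key_vanish {N : ℕ} (S : Fin 3 → Matrix (Fin N) (Fin N) ℂ) (hS : ∀ a, (S a).IsHermitian)
    (hcomm01 : S 0 * S 1 - S 1 * S 0 = Complex.I • S 2)
    (hcomm12 : S 1 * S 2 - S 2 * S 1 = Complex.I • S 0)
    (hcomm20 : S 2 * S 0 - S 0 * S 2 = Complex.I • S 1)
    (x y : Fin N → ℂ) (hxy : ∀ a, star x ⬝ᵥ (S a *ᵥ y) = 0) (c : Fin 3 → ℝ) :
    ∀ a, star ((exp ((-Complex.I) • ∑ b, ((c b : ℂ) • S b))) *ᵥ x) ⬝ᵥ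
      (S a *ᵥ ((exp ((-Complex.I) • ∑ b, ((c b : ℂ) • S b))) *ᵥ y)) = 0 := by
  have sc : ∀ (z : ℂ) (M : Matrix (Fin N) (Fin N) ℂ),
      (-Complex.I) • (z • (Complex.I • M)) = z • M := by
    intro z M
    rw [smul_smul, smul_smul, mul_comm (-Complex.I) z, mul_assoc, neg_mul, Complex.I_mul_I,
      neg_neg, mul_one]
  set X : Matrix (Fin N) (Fin N) ℂ := ∑ b, ((c b : ℂ) • S b) with hXdef
  have hX : Xᴴ = X := by
    simp [hXdef, conjTranspose_sum, conjTranspose_smul, (hS _).eq, Complex.star_def,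
      Complex.conj_ofReal]
  set K : Matrix (Fin N) (Fin N) ℂ := (-Complex.I) • X with hKdef
  have hK : Kᴴ = -K := by
    rw [hKdef, conjTranspose_smul, hX]
    simp
  have expand : ∀ a : Fin 3, S a * K - K * S a = (-Complex.I) • (S a * X - X * S a) := by
    intro a
    rw [hKdef, mul_smul_comm, smul_mul_assoc, ← smul_sub]
  have hK0 : S 0 * K - K * S 0 = (c 1 : ℂ) • S 2 - (c 2 : ℂ) • S 1 := by
    have e : S 0 * X - X * S 0 =
        (c 1 : ℂ) • (S 0 * S 1 - S 1 * S 0) - (c 2 : ℂ) • (S 2 * S 0 - S 0 * S 2) := by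
      rw [hXdef, Fin.sum_univ_three]
      simp only [mul_add, add_mul, mul_smul_comm, smul_mul_assoc, smul_sub]
      abel
    rw [expand, e, hcomm01, hcomm20, smul_sub, sc, sc]
  have hK1 : S 1 * K - K * S 1 = (c 2 : ℂ) • S 0 - (c 0 : ℂ) • S 2 := by
    have e : S 1 * X - X * S 1 =
        (c 2 : ℂ) • (S 1 * S 2 - S 2 * S 1) - (c 0 : ℂ) • (S 0 * S 1 - S 1 * S 0) := by
      rw [hXdef, Fin.sum_univ_three]
      simp only [mul_add, add_mul, mul_smul_comm, smul_mul_assoc, smul_sub]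
      abel
    rw [expand, e, hcomm12, hcomm01, smul_sub, sc, sc]
  have hK2 : S 2 * K - K * S 2 = (c 0 : ℂ) • S 1 - (c 1 : ℂ) • S 0 := by
    have e : S 2 * X - X * S 2 =
        (c 0 : ℂ) • (S 2 * S 0 - S 0 * S 2) - (c 1 : ℂ) • (S 1 * S 2 - S 2 * S 1) := by
      rw [hXdef, Fin.sum_univ_three]
      simp only [mul_add, add_mul, mul_smul_comm, smul_mul_assoc, smul_sub]
      abel
    rw [expand, e, hcomm20, hcomm12, smul_sub, sc, sc]
  -- the path of conjugating matrices
  set E : ℝ → Matrix (Fin N) (Fin N) ℂ := fun s => exp (s • K) with hEdef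
  have hEd : ∀ s, HasDerivAt E (K * E s) s := by
    intro s
    have h := hasDerivAt_exp_smul_const' (𝕂 := ℝ) K s
    exact h
  have hcmulVec : ∀ (w : Fin N → ℂ) (s : ℝ),
      HasDerivAt (fun r => E r *ᵥ w) ((K * E s) *ᵥ w) s := by
    intro w s
    let L : Matrix (Fin N) (Fin N) ℂ →L[ℂ] (Fin N → ℂ) :=
      LinearMap.toContinuousLinearMap
        { toFun := fun M : Matrix (Fin N) (Fin N) ℂ => M *ᵥ w
          map_add' := fun M₁ M₂ => Matrix.add_mulVec M₁ M₂ w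
          map_smul' := fun t M₁ => Matrix.smul_mulVec t M₁ w }
    exact (L.restrictScalars ℝ).hasFDerivAt.comp_hasDerivAt s (hEd s)
  set h : ℝ → (Fin 3 → ℂ) := fun s a => star (E s *ᵥ x) ⬝ᵥ (S a *ᵥ (E s *ᵥ y)) with hhdef
  set Cc : Matrix (Fin 3) (Fin 3) ℂ :=
    !![0, -(c 2 : ℂ), (c 1 : ℂ); (c 2 : ℂ), 0, -(c 0 : ℂ); -(c 1 : ℂ), (c 0 : ℂ), 0] with hCc
  have hh' : ∀ s b, h s b = star x ⬝ᵥ (((E s)ᴴ * S b * E s) *ᵥ y) := by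
    intro s b
    exact dot_conj (E s) (S b) (E s) x y
  have hcomb : ∀ (s : ℝ) (a : Fin 3) (D : Matrix (Fin N) (Fin N) ℂ), S a * K - K * S a = D →
      (K * E s)ᴴ * S a * E s + (E s)ᴴ * S a * (K * E s) = (E s)ᴴ * D * E s := by
    intro s a D hD
    rw [conjTranspose_mul, hK, ← hD]
    noncomm_ring
  have mkval : ∀ (s : ℝ) (a : Fin 3) (z w : Fin 3) (zc wc : ℂ),
      S a * K - K * S a = zc • S z - wc • S w →
      star ((K * E s) *ᵥ x) ⬝ᵥ (S a *ᵥ (E s *ᵥ y))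
        + star (E s *ᵥ x) ⬝ᵥ (S a *ᵥ ((K * E s) *ᵥ y))
      = zc * h s z - wc * h s w := by
    intro s a z w zc wc hD
    rw [dot_conj, dot_conj, ← dotProduct_add, ← Matrix.add_mulVec, hcomb s a _ hD]
    have expand2 : (E s)ᴴ * (zc • S z - wc • S w) * E s =
        zc • ((E s)ᴴ * S z * E s) - wc • ((E s)ᴴ * S w * E s) := by
      simp [mul_sub, sub_mul, mul_smul_comm, smul_mul_assoc]
    rw [expand2, Matrix.sub_mulVec, Matrix.smul_mulVec, Matrix.smul_mulVec,
      dotProduct_sub, dotProduct_smul, dotProduct_smul, ← hh' s z, ← hh' s w]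
    simp [smul_eq_mul]
  have base : ∀ (s : ℝ) (a : Fin 3),
      HasDerivAt (fun r => h r a)
        (star ((K * E s) *ᵥ x) ⬝ᵥ (S a *ᵥ (E s *ᵥ y))
          + star (E s *ᵥ x) ⬝ᵥ (S a *ᵥ ((K * E s) *ᵥ y))) s :=
    fun s a => hasDerivAt_stardot (S a) (hcmulVec x s) (hcmulVec y s)
  have hOde : ∀ s, HasDerivAt h (Cc *ᵥ h s) s := by
    intro s
    rw [hasDerivAt_pi]
    intro a
    fin_cases a
    · have b0 := base s 0
      rw [mkval s 0 2 1 (c 1 : ℂ) (c 2 : ℂ) hK0] at b0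
      refine b0.congr_deriv ?_
      simp [hCc, Matrix.mulVec, dotProduct, Fin.sum_univ_three]
      ring
    · have b1 := base s 1
      rw [mkval s 1 0 2 (c 2 : ℂ) (c 0 : ℂ) hK1] at b1
      refine b1.congr_deriv ?_
      simp [hCc, Matrix.mulVec, dotProduct, Fin.sum_univ_three]
      ring
    · have b2 := base s 2
      rw [mkval s 2 1 0 (c 0 : ℂ) (c 1 : ℂ) hK2] at b2
      refine b2.congr_deriv ?_
      simp [hCc, Matrix.mulVec, dotProduct, Fin.sum_univ_three]
      ring
  -- uniqueness of the ODE solution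
  let L2 : (Fin 3 → ℂ) →L[ℂ] (Fin 3 → ℂ) :=
    LinearMap.toContinuousLinearMap (Matrix.mulVecLin Cc)
  have hLip : ∀ t : ℝ, LipschitzWith ‖L2‖₊ (fun z : Fin 3 → ℂ => Cc *ᵥ z) := fun _ =>
    L2.lipschitz
  have h00 : h 0 = (fun _ : ℝ => (0 : Fin 3 → ℂ)) 0 := by
    funext a
    rw [hhdef]
    simp only [hEdef, zero_smul, exp_zero, Matrix.one_mulVec]
    exact hxy a
  have heq := ODE_solution_unique (v := fun _ z => Cc *ᵥ z) (f := h)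
    (g := fun _ : ℝ => (0 : Fin 3 → ℂ)) (a := 0) (b := 1) hLip
    (fun s _ => (hOde s).continuousAt.continuousWithinAt)
    (fun t _ => (hOde t).hasDerivWithinAt)
    continuousOn_const
    (fun t _ => by
      simpa [Matrix.mulVec_zero] using
        (hasDerivAt_const t (0 : Fin 3 → ℂ)).hasDerivWithinAt (s := Set.Ici t))
    h00
  have h1 : h 1 = 0 := heq (Set.right_mem_Icc.2 zero_le_one)
  intro a
  have hE1 : E 1 = exp K := by rw [hEdef]; simp
  have := congrFun h1 a
  rw [hhdef] at this
  simpa [hE1, hKdef, hXdef] using this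

end AuxiliaryLemmas

/-- Topological holonomy theorem: for a 1-anticoherent k-plane spanned by the
orthonormal family {φ_i}, and a smooth closed curve of rotations
U(t) = exp(-i m(t)·S) with U(0) = Id and U(T) mapping the plane to itself, the
overlap matrix Q_{ij} = ⟨φ_i| U(T) |φ_j⟩ is unitary, the Wilczek–Zee connection
A(t) vanishes, the path-ordered exponential F (solution of F' = A F, F(0) = Id)
equals Id at T, and hence the Wilczek–Zee holonomy U_geo = P·F(T)⁻¹ (P the polar
part of Q, i.e. Q = P·H with P unitary, H positive semidefinite) equals Q:
it depends only on the endpoint U(T), not on the path. -/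
theorem toponomic_holonomy
    {N k : ℕ} (T : ℝ) (hT : 0 ≤ T)
    (S : Fin 3 → Matrix (Fin N) (Fin N) ℂ)
    (hS : ∀ a, (S a).IsHermitian)
    (hcomm01 : S 0 * S 1 - S 1 * S 0 = Complex.I • S 2)
    (hcomm12 : S 1 * S 2 - S 2 * S 1 = Complex.I • S 0)
    (hcomm20 : S 2 * S 0 - S 0 * S 2 = Complex.I • S 1)
    (φ : Fin k → (Fin N → ℂ))
    (hφ : ∀ i j, star (φ i) ⬝ᵥ φ j = if i = j then 1 else 0)
    (hanti : ∀ (a : Fin 3) (i j : Fin k), star (φ i) ⬝ᵥ ((S a) *ᵥ φ j) = 0)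
    (m m' : ℝ → (Fin 3 → ℝ))
    (U : ℝ → Matrix (Fin N) (Fin N) ℂ)
    (hU : ∀ t, U t = NormedSpace.exp ((-Complex.I) • ∑ b, ((m t b : ℂ) • S b)))
    (hU0 : U 0 = 1)
    (hUT : Submodule.map (U T).mulVecLin (Submodule.span ℂ (Set.range φ)) =
      Submodule.span ℂ (Set.range φ))
    (A : ℝ → Matrix (Fin k) (Fin k) ℂ)
    (hA : ∀ t i j, A t i j =
      star (U t *ᵥ φ i) ⬝ᵥ
        ((((-Complex.I) • ∑ b, ((m' t b : ℂ) • S b)) * U t) *ᵥ φ j))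
    (hderiv : ∀ (t : ℝ) (j : Fin k),
      HasDerivAt (fun s => U s *ᵥ φ j)
        ((((-Complex.I) • ∑ b, ((m' t b : ℂ) • S b)) * U t) *ᵥ φ j) t)
    (Q : Matrix (Fin k) (Fin k) ℂ)
    (hQ : ∀ i j, Q i j = star (φ i) ⬝ᵥ (U T *ᵥ φ j)) :
    Q ∈ Matrix.unitaryGroup (Fin k) ℂ ∧
    (∀ t, A t = 0) ∧
    ∀ (F : ℝ → Matrix (Fin k) (Fin k) ℂ),
      F 0 = 1 → (∀ t, HasDerivAt F (A t * F t) t) →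
      ∀ (P H : Matrix (Fin k) (Fin k) ℂ),
        P ∈ Matrix.unitaryGroup (Fin k) ℂ → H.PosSemidef → Q = P * H →
        P * (F T)⁻¹ = Q := by
  -- U T is unitary
  have hXh : (∑ b, ((m T b : ℂ) • S b))ᴴ = ∑ b, ((m T b : ℂ) • S b) := by
    simp [conjTranspose_sum, conjTranspose_smul, (hS _).eq, Complex.star_def,
      Complex.conj_ofReal]
  have hUTu : (U T)ᴴ * U T = 1 := by
    rw [hU T]
    exact exp_unitary_conj _ hXh
  -- expansion of the images of the basis vectors in the plane
  have hmem : ∀ j, U T *ᵥ φ j ∈ Submodule.span ℂ (Set.range φ) := by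
    intro j
    rw [← hUT]
    exact ⟨φ j, Submodule.subset_span (Set.mem_range_self j), by
      simp [Matrix.mulVecLin_apply]⟩
  have hex : ∀ j, ∃ cf : Fin k → ℂ, ∑ i, cf i • φ i = U T *ᵥ φ j := by
    intro j
    exact (Submodule.mem_span_range_iff_exists_fun ℂ).mp (hmem j)
  choose cf hcf using hex
  have hQc : ∀ i j, Q i j = cf j i := by
    intro i j
    rw [hQ, ← hcf j, dotProduct_sum']
    simp [dotProduct_smul, hφ, smul_eq_mul]
  have horth : ∀ j l, star (U T *ᵥ φ j) ⬝ᵥ (U T *ᵥ φ l) = if j = l then 1 else 0 := by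
    intro j l
    rw [dot_unitary (U T) hUTu, hφ]
  have hcc : ∀ j l, (∑ i, (starRingEnd ℂ) (cf j i) * cf l i) = if j = l then 1 else 0 := by
    intro j l
    have := horth j l
    rw [← hcf j, ← hcf l] at this
    rw [← this, star_sum, sum_dotProduct']
    congr 1
    funext i
    rw [star_smul, smul_dotProduct, dotProduct_sum']
    simp [dotProduct_smul, hφ, smul_eq_mul, Finset.mul_sum, Complex.star_def]
  have hQunit : Q ∈ Matrix.unitaryGroup (Fin k) ℂ := by
    rw [Matrix.mem_unitaryGroup_iff']
    ext j l
    rw [Matrix.mul_apply, Matrix.one_apply]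
    rw [← hcc j l]
    congr 1
    funext i
    rw [Matrix.star_apply, hQc i j, hQc i l]
    rfl
  -- the connection vanishes
  have hA0 : ∀ t, A t = 0 := by
    intro t
    ext i j
    rw [hA]
    have hkey := key_vanish S hS hcomm01 hcomm12 hcomm20 (φ i) (φ j)
      (fun a => hanti a i j) (m t)
    rw [← hU t] at hkey
    rw [← Matrix.mulVec_mulVec, Matrix.smul_mulVec, sum_mulVec']
    rw [dotProduct_smul, dotProduct_sum']
    have : ∀ b : Fin 3, star (U t *ᵥ φ i) ⬝ᵥ (((m' t b : ℂ) • S b) *ᵥ (U t *ᵥ φ j)) = 0 := by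
      intro b
      rw [Matrix.smul_mulVec, dotProduct_smul, hkey b, smul_zero]
    simp only [this, Finset.sum_const_zero, smul_zero, Matrix.zero_apply]
  refine ⟨hQunit, hA0, ?_⟩
  intro F hF0 hF' P H hP hH hQPH
  have hFc : ∀ t, HasDerivAt F 0 t := by
    intro t
    have := hF' t
    rwa [hA0 t, zero_mul] at this
  have hFT : F T = 1 := by
    rw [← hF0]
    exact is_const_of_deriv_eq_zero (fun t => (hFc t).differentiableAt)
      (fun t => (hFc t).deriv) T 0
  have hPP : P * star P = 1 := (Matrix.mem_unitaryGroup_iff.mp hP)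
  have hPP' : star P * P = 1 := (Matrix.mem_unitaryGroup_iff'.mp hP)
  have hQQ' : star Q * Q = 1 := (Matrix.mem_unitaryGroup_iff'.mp hQunit)
  have hHPQ : H = star P * Q := by
    rw [hQPH, ← Matrix.mul_assoc, hPP', Matrix.one_mul]
  have hH2 : H ^ 2 = 1 ^ 2 := by
    have hstarH : star H = H := by
      rw [Matrix.star_eq_conjTranspose, hH.isHermitian.eq]
    calc H ^ 2 = star H * H := by rw [hstarH, sq]
    _ = star Q * (P * star P) * Q := by
        rw [hHPQ, Matrix.star_mul, star_star, Matrix.mul_assoc, Matrix.mul_assoc, Matrix.mul_assoc]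
    _ = 1 ^ 2 := by rw [hPP, Matrix.mul_one, hQQ', one_pow]
  have hH1 : H = 1 := by
    open scoped MatrixOrder in
    rw [← CFC.sqrt_sq H hH.nonneg, hH2, CFC.sqrt_sq (1 : Matrix (Fin k) (Fin k) ℂ)
      Matrix.PosDef.one.posSemidef.nonneg]
  rw [hFT, inv_one, Matrix.mul_one, hQPH, hH1, Matrix.mul_one]
end
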